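/- Let p be a point sphere complex. Let r, s, ŝ be isotropic vectors with ⟨r,s⟩ = ⟨r,ŝ⟩ = 0 (so f = span{r,s} and f̂ = span{r,ŝ} are contact elements sharing the common sphere r), and let p₁ ∈ span{r,s} and p̂₁ ∈ span{r,ŝ} be nonzero isotropic vectors with ⟨p₁,p⟩ = ⟨p̂₁,p⟩ = 0, p₁ ∉ span{r} and p̂₁ ∉ span{r} (the point spheres of the two contact elements). Assume that γ := span{p₁, p̂₁, r + ⟨r,p⟩p} is 3-dimensional and the induced form on γ has signature (2,1), so that γ is a circle. Then an isotropic vector w ∈ ℝ^{4,2} is orthogonal to the circle γ — i.e. ⟨w, v + ⟨v,p⟩p⟩ = 0 for every isotropic v ∈ γ^⊥ — if and only if w lies in the 4-dimensional subspace span{r, s, ŝ, p}. -/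

import Mathlib

noncomputable section

/-- The symmetric bilinear form of signature (4,2) on ℝ⁶, modelling ℝ^{4,2}. -/
def B (x y : Fin 6 → ℝ) : ℝ :=
  x 0 * y 0 + x 1 * y 1 + x 2 * y 2 + x 3 * y 3 - x 4 * y 4 - x 5 * y 5

/-- The induced form on the subspace `W` has signature (2,1) (it admits a
spanning pseudo-orthonormal triple of Gram matrix diag(1,1,-1)); in particular
`W` is 3-dimensional. -/
def SigTwoOne (W : Submodule ℝ (Fin 6 → ℝ)) : Prop :=
  ∃ u v w : Fin 6 → ℝ, Submodule.span ℝ ({u, v, w} : Set (Fin 6 → ℝ)) = W ∧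
    B u u = 1 ∧ B v v = 1 ∧ B w w = -1 ∧ B u v = 0 ∧ B u w = 0 ∧ B v w = 0

lemma B_symm (x y : Fin 6 → ℝ) : B x y = B y x := by simp [B]; ring

lemma B_add_left (x y z : Fin 6 → ℝ) : B (x + y) z = B x z + B y z := by
  simp [B]; ring

lemma B_sub_left (x y z : Fin 6 → ℝ) : B (x - y) z = B x z - B y z := by
  simp [B]; ring

lemma B_smul_left (a : ℝ) (x z : Fin 6 → ℝ) : B (a • x) z = a * B x z := by
  simp [B]; ring

lemma B_neg_left (x z : Fin 6 → ℝ) : B (-x) z = -B x z := by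
  simp [B]; ring

lemma B_neg_right (x z : Fin 6 → ℝ) : B x (-z) = -B x z := by
  simp [B]; ring

lemma B_add_right (x y z : Fin 6 → ℝ) : B x (y + z) = B x y + B x z := by
  simp [B]; ring

lemma B_sub_right (x y z : Fin 6 → ℝ) : B x (y - z) = B x y - B x z := by
  simp [B]; ring

lemma B_smul_right (a : ℝ) (x z : Fin 6 → ℝ) : B x (a • z) = a * B x z := by
  simp [B]; ring

lemma B_zero_left (z : Fin 6 → ℝ) : B 0 z = 0 := by simp [B]

lemma B_zero_right (z : Fin 6 → ℝ) : B z 0 = 0 := by simp [B]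

def Bl : (Fin 6 → ℝ) →ₗ[ℝ] (Fin 6 → ℝ) →ₗ[ℝ] ℝ :=
  LinearMap.mk₂ ℝ B B_add_left B_smul_left B_add_right B_smul_right

lemma B_nondeg (x : Fin 6 → ℝ) (h : ∀ y, B x y = 0) : x = 0 := by
  have h0 := h (fun j => if j.val = 0 then 1 else 0)
  have h1 := h (fun j => if j.val = 1 then 1 else 0)
  have h2 := h (fun j => if j.val = 2 then 1 else 0)
  have h3 := h (fun j => if j.val = 3 then 1 else 0)
  have h4 := h (fun j => if j.val = 4 then 1 else 0)
  have h5 := h (fun j => if j.val = 5 then 1 else 0)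
  norm_num [B, show ((3:Fin 6):ℕ) = 3 from rfl, show ((4:Fin 6):ℕ) = 4 from rfl,
    show ((5:Fin 6):ℕ) = 5 from rfl] at h0 h1 h2 h3 h4 h5
  funext i
  fin_cases i <;> simp [h0, h1, h2, h3, h4, h5]

lemma exists_perp {k : ℕ} (hk : 3 < k) (t : Fin k → (Fin 6 → ℝ))
    (g : Fin 3 → (Fin 6 → ℝ)) :
    ∃ c : Fin k → ℝ, c ≠ 0 ∧ ∀ i, B (∑ j, c j • t j) (g i) = 0 := by
  set M : Matrix (Fin 3) (Fin k) ℝ := fun i j => B (t j) (g i) with hM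
  have hker : LinearMap.ker M.mulVecLin ≠ ⊥ := by
    intro h
    have hinj : Function.Injective M.mulVecLin := LinearMap.ker_eq_bot.mp h
    have := LinearMap.finrank_le_finrank_of_injective hinj
    simp [Module.finrank_fin_fun] at this
    omega
  obtain ⟨c, hc, hc0⟩ := Submodule.ne_bot_iff _ |>.mp hker
  refine ⟨c, hc0, fun i => ?_⟩
  have h1 : M.mulVec c i = 0 := by
    have : M.mulVecLin c = 0 := hc
    simpa using congrFun this i
  have h2 : B (∑ j, c j • t j) (g i) = ∑ j, c j * B (t j) (g i) := by
    rw [show B (∑ j, c j • t j) (g i) = Bl.flip (g i) (∑ j, c j • t j) from rfl]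
    rw [map_sum]
    simp [B_smul_left]
    rfl
  rw [h2]
  rw [Matrix.mulVec, dotProduct] at h1
  rw [← h1]
  exact Finset.sum_congr rfl fun j _ => by rw [hM]; ring

lemma quad_root (A b C : ℝ) (hA : 0 < A) (hC : C < 0) :
    ∃ t : ℝ, A + 2 * b * t + C * t ^ 2 = 0 := by
  refine ⟨(-b - Real.sqrt (b ^ 2 - A * C)) / C, ?_⟩
  have hs : Real.sqrt (b ^ 2 - A * C) ^ 2 = b ^ 2 - A * C :=
    Real.sq_sqrt (by nlinarith)
  have hC' : C ≠ 0 := ne_of_lt hC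
  field_simp
  nlinarith [hs]

section Triple

variable (u v₀ w₀ : Fin 6 → ℝ)
variable (guu : B u u = 1) (gvv : B v₀ v₀ = 1) (gww : B w₀ w₀ = -1)
variable (guv : B u v₀ = 0) (guw : B u w₀ = 0) (gvw : B v₀ w₀ = 0)

lemma sum4_pos (c : Fin 4 → ℝ) (hc : c ≠ 0) :
    0 < c 0 ^ 2 + c 1 ^ 2 + c 2 ^ 2 + c 3 ^ 2 := by
  by_contra hsum
  push_neg at hsum
  have e0 : c 0 = 0 := by nlinarith [sq_nonneg (c 0), sq_nonneg (c 1), sq_nonneg (c 2), sq_nonneg (c 3)]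
  have e1 : c 1 = 0 := by nlinarith [sq_nonneg (c 0), sq_nonneg (c 1), sq_nonneg (c 2), sq_nonneg (c 3)]
  have e2 : c 2 = 0 := by nlinarith [sq_nonneg (c 0), sq_nonneg (c 1), sq_nonneg (c 2), sq_nonneg (c 3)]
  have e3 : c 3 = 0 := by nlinarith [sq_nonneg (c 0), sq_nonneg (c 1), sq_nonneg (c 2), sq_nonneg (c 3)]
  exact hc (funext fun j => by fin_cases j <;> assumption)

lemma sum5_pos (c : Fin 5 → ℝ) (hc : c ≠ 0) :
    0 < c 0 ^ 2 + c 1 ^ 2 + c 2 ^ 2 + c 3 ^ 2 + c 4 ^ 2 := by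
  by_contra hsum
  push_neg at hsum
  have e0 : c 0 = 0 := by nlinarith [sq_nonneg (c 0), sq_nonneg (c 1), sq_nonneg (c 2), sq_nonneg (c 3), sq_nonneg (c 4)]
  have e1 : c 1 = 0 := by nlinarith [sq_nonneg (c 0), sq_nonneg (c 1), sq_nonneg (c 2), sq_nonneg (c 3), sq_nonneg (c 4)]
  have e2 : c 2 = 0 := by nlinarith [sq_nonneg (c 0), sq_nonneg (c 1), sq_nonneg (c 2), sq_nonneg (c 3), sq_nonneg (c 4)]
  have e3 : c 3 = 0 := by nlinarith [sq_nonneg (c 0), sq_nonneg (c 1), sq_nonneg (c 2), sq_nonneg (c 3), sq_nonneg (c 4)]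
  have e4 : c 4 = 0 := by nlinarith [sq_nonneg (c 0), sq_nonneg (c 1), sq_nonneg (c 2), sq_nonneg (c 3), sq_nonneg (c 4)]
  exact hc (funext fun j => by fin_cases j <;> assumption)

include guu gvv guv in
lemma neg_vec : ∃ z, B z u = 0 ∧ B z v₀ = 0 ∧ B z w₀ = 0 ∧ B z z < 0 := by
  set E4 : Fin 6 → ℝ := fun j => if j.val = 4 then 1 else 0 with hE4
  set E5 : Fin 6 → ℝ := fun j => if j.val = 5 then 1 else 0 with hE5
  obtain ⟨c, hc, hperp⟩ := exists_perp (by norm_num) ![E4, E5, u, v₀] ![u, v₀, w₀]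
  set y : Fin 6 → ℝ := c 0 • E4 + c 1 • E5 with hy
  set z : Fin 6 → ℝ := y + c 2 • u + c 3 • v₀ with hz
  have hzs : (∑ j : Fin 4, c j • (![E4, E5, u, v₀]) j) = z := by
    simp [Fin.sum_univ_four, hz, hy]
    try abel
  have h1 : B z u = 0 := by have := hperp 0; rw [hzs] at this; simpa using this
  have h2 : B z v₀ = 0 := by have := hperp 1; rw [hzs] at this; simpa using this
  have h3 : B z w₀ = 0 := by have := hperp 2; rw [hzs] at this; simpa using this
  refine ⟨z, h1, h2, h3, ?_⟩
  have hyy : B y y = -(c 0 ^ 2) - c 1 ^ 2 := by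
    rw [hy, hE4, hE5]
    norm_num [B, show ((3:Fin 6):ℕ) = 3 from rfl, show ((4:Fin 6):ℕ) = 4 from rfl,
      show ((5:Fin 6):ℕ) = 5 from rfl]
    ring
  have hBuz : B u z = 0 := by rw [B_symm]; exact h1
  have hBvz : B v₀ z = 0 := by rw [B_symm]; exact h2
  have hBuy : B u y = -(c 2) := by
    have e : B u z = B u y + c 2 * B u u + c 3 * B u v₀ := by
      rw [hz, B_add_right, B_add_right, B_smul_right, B_smul_right]
    rw [hBuz, guu, guv] at e
    linarith
  have hBvy : B v₀ y = -(c 3) := by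
    have e : B v₀ z = B v₀ y + c 2 * B v₀ u + c 3 * B v₀ v₀ := by
      rw [hz, B_add_right, B_add_right, B_smul_right, B_smul_right]
    rw [hBvz, gvv, B_symm v₀ u, guv] at e
    linarith
  have hzz : B z z = -(c 0 ^ 2) - c 1 ^ 2 - c 2 ^ 2 - c 3 ^ 2 := by
    have e : B z z = B y z + c 2 * B u z + c 3 * B v₀ z := by
      rw [hz, B_add_left, B_add_left, B_smul_left, B_smul_left]
    have e2 : B y z = B y y + c 2 * B y u + c 3 * B y v₀ := by
      rw [hz, B_add_right, B_add_right, B_smul_right, B_smul_right]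
    rw [hBuz, hBvz] at e
    rw [B_symm y u, hBuy, B_symm y v₀, hBvy, hyy] at e2
    rw [e, e2]; ring
  rw [hzz]
  have := sum4_pos c hc
  linarith

include gww in
lemma pos_vec : ∃ q, B q u = 0 ∧ B q v₀ = 0 ∧ B q w₀ = 0 ∧ 0 < B q q := by
  set E0 : Fin 6 → ℝ := fun j => if j.val = 0 then 1 else 0 with hE0
  set E1 : Fin 6 → ℝ := fun j => if j.val = 1 then 1 else 0 with hE1
  set E2 : Fin 6 → ℝ := fun j => if j.val = 2 then 1 else 0 with hE2
  set E3 : Fin 6 → ℝ := fun j => if j.val = 3 then 1 else 0 with hE3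
  obtain ⟨c, hc, hperp⟩ := exists_perp (by norm_num) ![E0, E1, E2, E3, w₀] ![u, v₀, w₀]
  set y : Fin 6 → ℝ := c 0 • E0 + c 1 • E1 + c 2 • E2 + c 3 • E3 with hy
  set q : Fin 6 → ℝ := y + c 4 • w₀ with hq
  have hqs : (∑ j : Fin 5, c j • (![E0, E1, E2, E3, w₀]) j) = q := by
    simp [Fin.sum_univ_five, hq, hy]
    try abel
  have h1 : B q u = 0 := by have := hperp 0; rw [hqs] at this; simpa using this
  have h2 : B q v₀ = 0 := by have := hperp 1; rw [hqs] at this; simpa using this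
  have h3 : B q w₀ = 0 := by have := hperp 2; rw [hqs] at this; simpa using this
  refine ⟨q, h1, h2, h3, ?_⟩
  have hyy : B y y = c 0 ^ 2 + c 1 ^ 2 + c 2 ^ 2 + c 3 ^ 2 := by
    rw [hy, hE0, hE1, hE2, hE3]
    norm_num [B, show ((3:Fin 6):ℕ) = 3 from rfl, show ((4:Fin 6):ℕ) = 4 from rfl,
      show ((5:Fin 6):ℕ) = 5 from rfl]
    simp [Fin.ext_iff]
    ring
  have hBwq : B w₀ q = 0 := by rw [B_symm]; exact h3
  have hBwy : B w₀ y = c 4 := by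
    have e : B w₀ q = B w₀ y + c 4 * B w₀ w₀ := by
      rw [hq, B_add_right, B_smul_right]
    rw [hBwq, gww] at e
    linarith
  have hqq : B q q = c 0 ^ 2 + c 1 ^ 2 + c 2 ^ 2 + c 3 ^ 2 + c 4 ^ 2 := by
    have e : B q q = B y q + c 4 * B w₀ q := by
      rw [hq, B_add_left, B_smul_left]
    have e2 : B y q = B y y + c 4 * B y w₀ := by
      rw [hq, B_add_right, B_smul_right]
    rw [hBwq] at e
    rw [B_symm y w₀, hBwy, hyy] at e2
    rw [e, e2]; ring
  rw [hqq]
  exact sum5_pos c hc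

include guu gvv gww guv in
lemma iso_vec : ∃ n, B n u = 0 ∧ B n v₀ = 0 ∧ B n w₀ = 0 ∧ B n n = 0 ∧ n ≠ 0 := by
  obtain ⟨z, hz1, hz2, hz3, hzz⟩ := neg_vec u v₀ w₀ guu gvv guv
  obtain ⟨q, hq1, hq2, hq3, hqq⟩ := pos_vec u v₀ w₀ gww
  obtain ⟨t, ht⟩ := quad_root (B q q) (B q z) (B z z) hqq hzz
  refine ⟨q + t • z, ?_, ?_, ?_, ?_, ?_⟩
  · rw [B_add_left, B_smul_left, hq1, hz1]; ring
  · rw [B_add_left, B_smul_left, hq2, hz2]; ring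
  · rw [B_add_left, B_smul_left, hq3, hz3]; ring
  · rw [B_add_left, B_smul_left, B_add_right, B_add_right, B_smul_right, B_smul_right,
      B_symm z q]
    nlinarith [ht]
  · intro h0
    have hq' : q = -(t • z) := by
      have := eq_neg_of_add_eq_zero_left h0
      exact this
    have : B q q = t ^ 2 * B z z := by
      rw [hq', B_neg_left, B_neg_right, B_smul_left, B_smul_right]
      ring
    nlinarith

include guu gvv gww guv guw gvw in
lemma proj_perp (y : Fin 6 → ℝ) :
    B (y - B y u • u - B y v₀ • v₀ + B y w₀ • w₀) u = 0 ∧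
    B (y - B y u • u - B y v₀ • v₀ + B y w₀ • w₀) v₀ = 0 ∧
    B (y - B y u • u - B y v₀ • v₀ + B y w₀ • w₀) w₀ = 0 := by
  have gvu : B v₀ u = 0 := by rw [B_symm]; exact guv
  have gwu : B w₀ u = 0 := by rw [B_symm]; exact guw
  have gwv : B w₀ v₀ = 0 := by rw [B_symm]; exact gvw
  refine ⟨?_, ?_, ?_⟩ <;>
    simp only [B_add_left, B_sub_left, B_smul_left, guu, gvv, gww, guv, guw, gvw,
      gvu, gwu, gwv] <;> ring

include guu gvv gww guv guw gvw in
lemma perp_nondeg (x : Fin 6 → ℝ)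
    (hx1 : B x u = 0) (hx2 : B x v₀ = 0) (hx3 : B x w₀ = 0)
    (h : ∀ y, B y u = 0 → B y v₀ = 0 → B y w₀ = 0 → B x y = 0) : x = 0 := by
  apply B_nondeg
  intro y
  obtain ⟨k1, k2, k3⟩ := proj_perp u v₀ w₀ guu gvv gww guv guw gvw y
  have hxy' : B x (y - B y u • u - B y v₀ • v₀ + B y w₀ • w₀) = 0 := h _ k1 k2 k3
  have e : B x y = B x (y - B y u • u - B y v₀ • v₀ + B y w₀ • w₀)
      + B y u * B x u + B y v₀ * B x v₀ - B y w₀ * B x w₀ := by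
    simp only [B_add_right, B_sub_right, B_smul_right]; ring
  rw [e, hxy', hx1, hx2, hx3]; ring

include guu gvv gww guv guw gvw in
lemma hyp_pair : ∃ n m : Fin 6 → ℝ,
    (B n u = 0 ∧ B n v₀ = 0 ∧ B n w₀ = 0) ∧
    (B m u = 0 ∧ B m v₀ = 0 ∧ B m w₀ = 0) ∧
    B n n = 0 ∧ B m m = 0 ∧ B n m = 1 := by
  obtain ⟨n, hn1, hn2, hn3, hnn, hne⟩ := iso_vec u v₀ w₀ guu gvv gww guv
  have hex : ∃ m₀, B m₀ u = 0 ∧ B m₀ v₀ = 0 ∧ B m₀ w₀ = 0 ∧ B n m₀ ≠ 0 := by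
    by_contra h
    refine hne (perp_nondeg u v₀ w₀ guu gvv gww guv guw gvw n hn1 hn2 hn3 ?_)
    intro m₀ h1 h2 h3
    by_contra hb
    exact h ⟨m₀, h1, h2, h3, hb⟩
  obtain ⟨m₀, hm1, hm2, hm3, hb⟩ := hex
  set b := B n m₀ with hbdef
  refine ⟨n, b⁻¹ • m₀ - (B m₀ m₀ / (2 * b ^ 2)) • n, ⟨hn1, hn2, hn3⟩, ⟨?_, ?_, ?_⟩,
    hnn, ?_, ?_⟩
  · rw [B_sub_left, B_smul_left, B_smul_left, hm1, hn1]; ring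
  · rw [B_sub_left, B_smul_left, B_smul_left, hm2, hn2]; ring
  · rw [B_sub_left, B_smul_left, B_smul_left, hm3, hn3]; ring
  · have hmn : B m₀ n = b := (B_symm m₀ n).trans hbdef.symm
    simp only [B_sub_left, B_sub_right, B_smul_left, B_smul_right, hmn, hnn, ← hbdef]
    field_simp
    ring
  · simp only [B_sub_right, B_smul_right, hnn, ← hbdef]
    field_simp
    ring

include guu gvv gww guv guw gvw in
lemma perp_span (x : Fin 6 → ℝ)
    (hx : ∀ v, B v v = 0 → v ≠ 0 →
      (B v u = 0 ∧ B v v₀ = 0 ∧ B v w₀ = 0) → B x v = 0) :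
    ∀ y, B y u = 0 → B y v₀ = 0 → B y w₀ = 0 → B x y = 0 := by
  obtain ⟨n, m, ⟨hn1, hn2, hn3⟩, ⟨hm1, hm2, hm3⟩, hnn, hmm, hnm⟩ :=
    hyp_pair u v₀ w₀ guu gvv gww guv guw gvw
  have hmn : B m n = 1 := by rw [B_symm]; exact hnm
  have hnne : n ≠ 0 := by
    intro h; rw [h, B_symm, B_zero_right] at hnm; norm_num at hnm
  have hmne : m ≠ 0 := by
    intro h; rw [h, B_zero_right] at hnm; norm_num at hnm
  have hxn : B x n = 0 := hx n hnn hnne ⟨hn1, hn2, hn3⟩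
  have hxm : B x m = 0 := hx m hmm hmne ⟨hm1, hm2, hm3⟩
  intro y h1 h2 h3
  set y' := y - B y m • n - B y n • m with hy'
  have hy'n : B y' n = 0 := by
    rw [hy', B_sub_left, B_sub_left, B_smul_left, B_smul_left, hnn, hmn]; ring
  have hy'm : B y' m = 0 := by
    rw [hy', B_sub_left, B_sub_left, B_smul_left, B_smul_left, hnm, hmm]; ring
  have hny' : B n y' = 0 := by rw [B_symm]; exact hy'n
  have hmy' : B m y' = 0 := by rw [B_symm]; exact hy'm
  set v := y' + n - (B y' y' / 2) • m with hv
  have hBmv : B m v = 1 := by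
    rw [hv, B_sub_right, B_add_right, B_smul_right, hmy', hmn, hmm]; ring
  have hvne : v ≠ 0 := by
    intro h; rw [h, B_zero_right] at hBmv; norm_num at hBmv
  have hvv : B v v = 0 := by
    have e1 : B v v = B y' v + B n v - (B y' y' / 2) * B m v := by
      rw [hv, B_sub_left, B_add_left, B_smul_left]
    have e2 : B y' v = B y' y' + B y' n - (B y' y' / 2) * B y' m := by
      rw [hv, B_sub_right, B_add_right, B_smul_right]
    have e3 : B n v = B n y' + B n n - (B y' y' / 2) * B n m := by
      rw [hv, B_sub_right, B_add_right, B_smul_right]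
    rw [e2, hy'n, hy'm] at e1
    rw [e3, hny', hnn, hnm] at e1
    rw [hBmv] at e1
    rw [e1]; ring
  have hvperp : B v u = 0 ∧ B v v₀ = 0 ∧ B v w₀ = 0 := by
    refine ⟨?_, ?_, ?_⟩ <;>
      rw [hv, B_sub_left, B_add_left, B_smul_left, hy', B_sub_left, B_sub_left,
        B_smul_left, B_smul_left]
    · rw [h1, hn1, hm1]; ring
    · rw [h2, hn2, hm2]; ring
    · rw [h3, hn3, hm3]; ring
  have hxv : B x v = 0 := hx v hvv hvne hvperp
  have hxy' : B x y' = 0 := by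
    have e : B x v = B x y' + B x n - (B y' y' / 2) * B x m := by
      rw [hv, B_sub_right, B_add_right, B_smul_right]
    rw [hxv, hxn, hxm] at e
    linarith
  have e : B x y = B x y' + B y m * B x n + B y n * B x m := by
    rw [hy', B_sub_right, B_sub_right, B_smul_right, B_smul_right]; ring
  rw [e, hxy', hxn, hxm]; ring

end Triple

/-- Given two contact elements `f = span{r,s}` and
`f' = span{r,s'}` sharing the common sphere `r`, with point spheres `p₁, p₁'`,
the spheres orthogonal to the circle `γ = span{p₁, p₁', r + ⟨r,p⟩p}` are
exactly the isotropic vectors of the 4-dimensional subspace `span{r,s,s',p}`. -/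
theorem stmt_3 (p r s s' p₁ p₁' : Fin 6 → ℝ) (hp : B p p = -1)
    (hr : r ≠ 0) (ir : B r r = 0) (hs : s ≠ 0) (is1 : B s s = 0)
    (hs' : s' ≠ 0) (is2 : B s' s' = 0)
    (hrs : B r s = 0) (hrs' : B r s' = 0)
    (hp₁ : p₁ ≠ 0) (ip₁ : B p₁ p₁ = 0) (hp₁p : B p₁ p = 0)
    (hp₁mem : p₁ ∈ Submodule.span ℝ ({r, s} : Set (Fin 6 → ℝ)))
    (hp₁r : p₁ ∉ Submodule.span ℝ ({r} : Set (Fin 6 → ℝ)))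
    (hp₁' : p₁' ≠ 0) (ip₁' : B p₁' p₁' = 0) (hp₁'p : B p₁' p = 0)
    (hp₁'mem : p₁' ∈ Submodule.span ℝ ({r, s'} : Set (Fin 6 → ℝ)))
    (hp₁'r : p₁' ∉ Submodule.span ℝ ({r} : Set (Fin 6 → ℝ)))
    (γ : Submodule ℝ (Fin 6 → ℝ))
    (hγ : γ = Submodule.span ℝ ({p₁, p₁', r + B r p • p} : Set (Fin 6 → ℝ)))
    (hdim : Module.finrank ℝ γ = 3) (hsig : SigTwoOne γ)
    (w : Fin 6 → ℝ) (hw : w ≠ 0) (iw : B w w = 0) :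
    (∀ v : Fin 6 → ℝ, B v v = 0 → v ≠ 0 → (∀ x ∈ γ, B v x = 0) →
        B w (v + B v p • p) = 0) ↔
      w ∈ Submodule.span ℝ ({r, s, s', p} : Set (Fin 6 → ℝ)) := by
  have hrP : r ∈ Submodule.span ℝ ({r, s, s', p} : Set (Fin 6 → ℝ)) :=
    Submodule.subset_span (by simp)
  have hpP : p ∈ Submodule.span ℝ ({r, s, s', p} : Set (Fin 6 → ℝ)) :=
    Submodule.subset_span (by simp)
  have hγle : γ ≤ Submodule.span ℝ ({r, s, s', p} : Set (Fin 6 → ℝ)) := by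
    rw [hγ, Submodule.span_le]
    intro x hx
    simp only [Set.mem_insert_iff, Set.mem_singleton_iff] at hx
    rcases hx with rfl | rfl | rfl
    · exact Submodule.span_mono (by intro a ha; simp only [Set.mem_insert_iff,
        Set.mem_singleton_iff] at ha ⊢; tauto) hp₁mem
    · exact Submodule.span_mono (by intro a ha; simp only [Set.mem_insert_iff,
        Set.mem_singleton_iff] at ha ⊢; tauto) hp₁'mem
    · exact Submodule.add_mem _ hrP (Submodule.smul_mem _ _ hpP)
  constructor
  · intro H
    obtain ⟨u, v₀, w₀, hspan, guu, gvv, gww, guv, guw, gvw⟩ := hsig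
    have huγ : u ∈ γ := hspan ▸ Submodule.subset_span (by simp)
    have hvγ : v₀ ∈ γ := hspan ▸ Submodule.subset_span (by simp)
    have hwγ : w₀ ∈ γ := hspan ▸ Submodule.subset_span (by simp)
    have hUp : ∀ x : Fin 6 → ℝ, B x u = 0 → B x v₀ = 0 → B x w₀ = 0 →
        ∀ y ∈ γ, B x y = 0 := by
      intro x h1 h2 h3 y hy
      rw [← hspan] at hy
      induction hy using Submodule.span_induction with
      | mem z hz =>
        simp only [Set.mem_insert_iff, Set.mem_singleton_iff] at hz
        rcases hz with rfl | rfl | rfl <;> assumption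
      | zero => exact B_zero_right x
      | add a b _ _ ha hb => rw [B_add_right, ha, hb]; ring
      | smul t a _ ha => rw [B_smul_right, ha]; ring
    set w' := w + B w p • p with hw'
    have key : ∀ v, B v v = 0 → v ≠ 0 →
        (B v u = 0 ∧ B v v₀ = 0 ∧ B v w₀ = 0) → B w' v = 0 := by
      rintro v hvv hvne ⟨h1, h2, h3⟩
      have hH := H v hvv hvne (hUp v h1 h2 h3)
      have e1 : B w (v + B v p • p) = B w v + B v p * B w p := by
        rw [B_add_right, B_smul_right]
      have e2 : B w' v = B w v + B w p * B p v := by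
        rw [hw', B_add_left, B_smul_left]
      rw [e2, B_symm p v]
      rw [e1] at hH
      linarith
    have hperpall : ∀ y, B y u = 0 → B y v₀ = 0 → B y w₀ = 0 → B w' y = 0 :=
      perp_span u v₀ w₀ guu gvv gww guv guw gvw w' key
    obtain ⟨k1, k2, k3⟩ := proj_perp u v₀ w₀ guu gvv gww guv guw gvw w'
    set w'' := w' - B w' u • u - B w' v₀ • v₀ + B w' w₀ • w₀ with hw''
    have hw''0 : w'' = 0 := by
      apply perp_nondeg u v₀ w₀ guu gvv gww guv guw gvw w'' k1 k2 k3
      intro y h1 h2 h3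
      have hy' : B w' y = 0 := hperpall y h1 h2 h3
      have e : B w'' y = B w' y - B w' u * B u y - B w' v₀ * B v₀ y
          + B w' w₀ * B w₀ y := by
        rw [hw'', B_add_left, B_sub_left, B_sub_left, B_smul_left, B_smul_left,
          B_smul_left]
      rw [e, hy', B_symm u y, h1, B_symm v₀ y, h2, B_symm w₀ y, h3]; ring
    have hw'γ : w' ∈ γ := by
      have h2 : w' - (B w' u • u + B w' v₀ • v₀ - B w' w₀ • w₀) = w'' := by
        rw [hw'']; abel
      rw [hw''0] at h2
      rw [sub_eq_zero.mp h2]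
      exact Submodule.sub_mem _ (Submodule.add_mem _ (Submodule.smul_mem _ _ huγ)
        (Submodule.smul_mem _ _ hvγ)) (Submodule.smul_mem _ _ hwγ)
    have hwdef : w = w' - B w p • p := by rw [hw']; abel
    rw [hwdef]
    exact Submodule.sub_mem _ (hγle hw'γ) (Submodule.smul_mem _ _ hpP)
  · intro hmem v hvv hvne hvperp
    have hfr : B v r + B r p * B v p = 0 := by
      have hx : (r + B r p • p) ∈ γ := by
        rw [hγ]; exact Submodule.subset_span (by simp)
      have h := hvperp _ hx
      rw [B_add_right, B_smul_right] at h
      linarith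
    have hvp₁ : B v p₁ = 0 := hvperp _ (by rw [hγ]; exact Submodule.subset_span (by simp))
    have hvp₁' : B v p₁' = 0 := hvperp _ (by rw [hγ]; exact Submodule.subset_span (by simp))
    obtain ⟨α, β, hαβ⟩ := Submodule.mem_span_pair.mp hp₁mem
    have hβ : β ≠ 0 := by
      intro h
      exact hp₁r (Submodule.mem_span_singleton.mpr
        ⟨α, by rw [← hαβ, h, zero_smul, add_zero]⟩)
    obtain ⟨α', β', hαβ'⟩ := Submodule.mem_span_pair.mp hp₁'mem
    have hβ' : β' ≠ 0 := by
      intro h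
      exact hp₁'r (Submodule.mem_span_singleton.mpr
        ⟨α', by rw [← hαβ', h, zero_smul, add_zero]⟩)
    have goaleq : B w (v + B v p • p) = B w v + B v p * B w p := by
      rw [B_add_right, B_smul_right]
    rw [goaleq]
    have Qr : B r v + B v p * B r p = 0 := by rw [B_symm r v]; linarith [hfr]
    have Qs : B s v + B v p * B s p = 0 := by
      have h1 : α * B v r + β * B v s = 0 := by
        rw [← hαβ, B_add_right, B_smul_right, B_smul_right] at hvp₁; linarith
      have h2 : α * B r p + β * B s p = 0 := by
        have hh := hp₁p
        rw [← hαβ, B_add_left, B_smul_left, B_smul_left] at hh; linarith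
      have h3 : β * (B s v + B v p * B s p) = -α * (B v r + B r p * B v p) := by
        rw [B_symm s v]; linear_combination h1 + B v p * h2
      rw [hfr] at h3
      have h4 : β * (B s v + B v p * B s p) = 0 := by rw [h3]; ring
      exact (mul_eq_zero.mp h4).resolve_left hβ
    have Qs' : B s' v + B v p * B s' p = 0 := by
      have h1 : α' * B v r + β' * B v s' = 0 := by
        rw [← hαβ', B_add_right, B_smul_right, B_smul_right] at hvp₁'; linarith
      have h2 : α' * B r p + β' * B s' p = 0 := by
        have hh := hp₁'p
        rw [← hαβ', B_add_left, B_smul_left, B_smul_left] at hh; linarith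
      have h3 : β' * (B s' v + B v p * B s' p) = -α' * (B v r + B r p * B v p) := by
        rw [B_symm s' v]; linear_combination h1 + B v p * h2
      rw [hfr] at h3
      have h4 : β' * (B s' v + B v p * B s' p) = 0 := by rw [h3]; ring
      exact (mul_eq_zero.mp h4).resolve_left hβ'
    have Qp : B p v + B v p * B p p = 0 := by rw [hp, B_symm p v]; ring
    clear hw iw goaleq
    induction hmem using Submodule.span_induction with
    | mem x hx =>
      simp only [Set.mem_insert_iff, Set.mem_singleton_iff] at hx
      rcases hx with rfl | rfl | rfl | rfl
      exacts [Qr, Qs, Qs', Qp]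
    | zero => rw [B_zero_left, B_zero_left]; ring
    | add a b _ _ ha hb => rw [B_add_left, B_add_left]; linarith
    | smul t a _ ha => rw [B_smul_left, B_smul_left]; linear_combination t * ha
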